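/- Suppose V : (0,∞) → (0,∞) satisfies V(y)/V(x) ≤ C(γ) (y/x)^{2-α+γ} for all y ≥ x > 0, for some constants α ∈ (1,2], γ ∈ (0,α), C(γ) > 0. If additionally V(y) = E[X^2; |X| ≤ y] for a random variable X, then P(|X| > x) ≤ C' V(x)/x^2 for all x > 0, where C' = 4C(γ) Σ_{j≥1} 2^{-(α-γ)j} < ∞. -/

import Mathlib

open MeasureTheory ProbabilityTheory Filter Topology Set

/-- if the truncated second moment `V(y) = E[X²; |X| ≤ y]` is positive and
satisfies the Potter-type bound `V(y)/V(x) ≤ C(γ)(y/x)^{2-α+γ}` for `y ≥ x > 0`, with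
`α ∈ (1,2]`, `γ ∈ (0,α)`, then `P(|X| > x) ≤ C' V(x)/x²` with
`C' = 4 C(γ) ∑_{j≥1} 2^{-(α-γ)j}`. -/
theorem tail_le_const_mul_truncated_second_moment
    {Ω : Type*} [MeasurableSpace Ω] (P : Measure Ω) [IsProbabilityMeasure P]
    (X : Ω → ℝ) (hX : Measurable X)
    (V : ℝ → ℝ) (hV : ∀ y > (0:ℝ), V y = ∫ ω in {ω | |X ω| ≤ y}, (X ω) ^ 2 ∂P)
    (α γ Cγ : ℝ) (hα : 1 < α ∧ α ≤ 2) (hγ : 0 < γ ∧ γ < α) (hC : 0 < Cγ)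
    (hVpos : ∀ y > (0:ℝ), 0 < V y)
    (hPotter : ∀ x > (0:ℝ), ∀ y, x ≤ y → V y / V x ≤ Cγ * (y / x) ^ (2 - α + γ)) :
    ∀ x > (0:ℝ),
      (P {ω | x < |X ω|}).toReal ≤
        (4 * Cγ * ∑' j : ℕ, (2:ℝ) ^ (-(α - γ) * ((j:ℝ) + 1))) * V x / x ^ 2 := by
  obtain ⟨hα1, hα2⟩ := hα
  obtain ⟨hγ0, hγα⟩ := hγ
  intro x hx
  have hx2 : (0:ℝ) < x ^ 2 := by positivity
  have hVx : 0 < V x := hVpos x hx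
  -- the annuli
  set A : ℕ → Set Ω := fun j => {ω | 2 ^ j * x < |X ω| ∧ |X ω| ≤ 2 ^ (j + 1) * x} with hA
  have hAmeas : ∀ j, MeasurableSet (A j) := fun j =>
    (measurableSet_lt measurable_const hX.abs).inter
      (measurableSet_le hX.abs measurable_const)
  -- tail = union of annuli
  have hUnion : {ω | x < |X ω|} = ⋃ j, A j := by
    ext ω
    simp only [mem_setOf_eq, mem_iUnion, hA]
    constructor
    · intro hω
      have hex : ∃ m : ℕ, |X ω| ≤ 2 ^ (m + 1) * x := by
        obtain ⟨n, hn⟩ := pow_unbounded_of_one_lt (|X ω| / x) (one_lt_two (α := ℝ))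
        exact ⟨n, by
          have := (div_le_iff₀ hx).mp hn.le
          calc |X ω| ≤ 2 ^ n * x := this
            _ ≤ 2 ^ (n + 1) * x := by
                have : (2:ℝ) ^ n ≤ 2 ^ (n + 1) :=
                  pow_le_pow_right₀ (by norm_num) (Nat.le_succ n)
                nlinarith⟩
      refine ⟨Nat.find hex, ?_, Nat.find_spec hex⟩
      rcases Nat.eq_zero_or_pos (Nat.find hex) with h0 | hpos
      · rw [h0]; simpa using hω
      · obtain ⟨k, hk⟩ := Nat.exists_eq_succ_of_ne_zero hpos.ne'
        have := Nat.find_min hex (m := k) (by omega)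
        push_neg at this
        rw [hk]
        exact this
    · rintro ⟨j, h1, _⟩
      have : x ≤ 2 ^ j * x := le_mul_of_one_le_left hx.le (one_le_pow₀ one_le_two)
      linarith
  -- disjointness
  have hdisj : Pairwise (Function.onFun Disjoint A) := by
    have key : ∀ i j : ℕ, i < j → Disjoint (A i) (A j) := by
      intro i j hij
      rw [Set.disjoint_left]
      rintro ω ⟨_, h2⟩ ⟨h3, _⟩
      have h4 : (2:ℝ) ^ (i + 1) ≤ 2 ^ j := pow_le_pow_right₀ (by norm_num) hij
      have : (2:ℝ) ^ (i + 1) * x ≤ 2 ^ j * x := by nlinarith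
      linarith
    intro i j hij
    rcases hij.lt_or_gt with h | h
    · exact key i j h
    · exact (key j i h).symm
  -- integrability of X² on {|X| ≤ y}
  have hInt : ∀ y : ℝ, 0 < y → IntegrableOn (fun ω => (X ω) ^ 2) {ω | |X ω| ≤ y} P := by
    intro y hy
    refine Measure.integrableOn_of_bounded (measure_ne_top P _)
      ((hX.pow_const 2).aestronglyMeasurable) (M := y ^ 2) ?_
    refine (ae_restrict_iff' (measurableSet_le hX.abs measurable_const)).2 (ae_of_all _ ?_)
    intro ω hω
    have : |X ω| ^ 2 ≤ y ^ 2 := pow_le_pow_left₀ (abs_nonneg _) hω 2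
    rw [Real.norm_eq_abs, abs_of_nonneg (sq_nonneg _)]
    rwa [sq_abs] at this
  -- per-annulus Chebyshev + Potter bound
  set c : ℕ → ℝ := fun j => 4 * Cγ * V x / x ^ 2 * (2:ℝ) ^ (-(α - γ) * ((j:ℝ) + 1)) with hc
  have hc_nonneg : ∀ j, 0 ≤ c j := by
    intro j
    have : (0:ℝ) < (2:ℝ) ^ (-(α - γ) * ((j:ℝ) + 1)) := Real.rpow_pos_of_pos two_pos _
    positivity
  have hterm : ∀ j : ℕ, (P (A j)).toReal ≤ c j := by
    intro j
    set z : ℝ := 2 ^ j * x with hz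
    set y : ℝ := 2 ^ (j + 1) * x with hy
    have hzpos : 0 < z := by positivity
    have hypos : 0 < y := by positivity
    have hxy : x ≤ y := le_mul_of_one_le_left hx.le (one_le_pow₀ one_le_two)
    have hsub : A j ⊆ {ω | |X ω| ≤ y} := fun ω hω => hω.2
    -- Chebyshev
    have cheb : z ^ 2 * (P (A j)).toReal ≤ ∫ ω in A j, (X ω) ^ 2 ∂P := by
      refine setIntegral_ge_of_const_le_real (hAmeas j) (measure_ne_top P _) ?_
        (((hInt y hypos)).mono_set hsub)
      intro ω hω
      have h1 : z ≤ |X ω| := hω.1.le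
      calc z ^ 2 ≤ |X ω| ^ 2 := pow_le_pow_left₀ hzpos.le h1 2
        _ = (X ω) ^ 2 := sq_abs _
    have mono : ∫ ω in A j, (X ω) ^ 2 ∂P ≤ ∫ ω in {ω | |X ω| ≤ y}, (X ω) ^ 2 ∂P := by
      refine setIntegral_mono_set (hInt y hypos) ?_ (HasSubset.Subset.eventuallyLE hsub)
      exact ae_of_all _ fun ω => sq_nonneg _
    have step1 : (P (A j)).toReal ≤ V y / z ^ 2 := by
      rw [le_div_iff₀ (by positivity)]
      calc (P (A j)).toReal * z ^ 2 = z ^ 2 * (P (A j)).toReal := by ring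
        _ ≤ ∫ ω in A j, (X ω) ^ 2 ∂P := cheb
        _ ≤ ∫ ω in {ω | |X ω| ≤ y}, (X ω) ^ 2 ∂P := mono
        _ = V y := (hV y hypos).symm
    -- Potter
    have potter : V y ≤ Cγ * ((2:ℝ) ^ (j + 1) : ℝ) ^ (2 - α + γ) * V x := by
      have h := hPotter x hx y hxy
      have hyx : y / x = (2:ℝ) ^ (j + 1) := by
        field_simp [hy]
        rw [hy]; ring
      rw [hyx] at h
      calc V y = (V y / V x) * V x := by field_simp
        _ ≤ (Cγ * ((2:ℝ) ^ (j + 1)) ^ (2 - α + γ)) * V x := by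
            apply mul_le_mul_of_nonneg_right h hVx.le
    -- arithmetic
    have arith : Cγ * ((2:ℝ) ^ (j + 1) : ℝ) ^ (2 - α + γ) * V x / z ^ 2 = c j := by
      have h2 : ((2:ℝ) ^ (j + 1) : ℝ) ^ (2 - α + γ)
          = (2:ℝ) ^ (((j:ℝ) + 1) * (2 - α + γ)) := by
        rw [← Real.rpow_natCast (2:ℝ) (j + 1), ← Real.rpow_mul (by norm_num)]
        push_cast
        ring_nf
      have hz2 : z ^ 2 = (2:ℝ) ^ (2 * (j:ℝ)) * x ^ 2 := by
        rw [hz, mul_pow, ← pow_mul, ← Real.rpow_natCast (2:ℝ) (j * 2)]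
        push_cast
        ring_nf
      have hsplit : (2:ℝ) ^ (((j:ℝ) + 1) * (2 - α + γ))
          = (2:ℝ) ^ (2 * (j:ℝ)) * (4 * (2:ℝ) ^ (-(α - γ) * ((j:ℝ) + 1))) := by
        have h4 : (4:ℝ) = (2:ℝ) ^ (2:ℝ) := by
          rw [show (2:ℝ) = ((2:ℕ):ℝ) by norm_num, Real.rpow_natCast]; norm_num
        rw [h4, ← Real.rpow_add two_pos, ← Real.rpow_add two_pos]
        congr 1
        ring
      rw [h2, hz2, hsplit, hc]
      have hp1 : (0:ℝ) < (2:ℝ) ^ (2 * (j:ℝ)) := Real.rpow_pos_of_pos two_pos _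
      field_simp
    calc (P (A j)).toReal ≤ V y / z ^ 2 := step1
      _ ≤ Cγ * ((2:ℝ) ^ (j + 1) : ℝ) ^ (2 - α + γ) * V x / z ^ 2 := by
          apply div_le_div_of_nonneg_right potter (by positivity) |>.trans_eq rfl
      _ = c j := arith
  -- summability
  have hr : (2:ℝ) ^ (-(α - γ)) < 1 :=
    Real.rpow_lt_one_of_one_lt_of_neg one_lt_two (by linarith)
  have hr0 : (0:ℝ) ≤ (2:ℝ) ^ (-(α - γ)) := (Real.rpow_pos_of_pos two_pos _).le
  have hgeom : Summable (fun j : ℕ => ((2:ℝ) ^ (-(α - γ))) ^ j) :=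
    summable_geometric_of_lt_one hr0 hr
  have hshape : ∀ j : ℕ, (2:ℝ) ^ (-(α - γ) * ((j:ℝ) + 1)) = ((2:ℝ) ^ (-(α - γ))) ^ (j + 1) := by
    intro j
    rw [← Real.rpow_natCast ((2:ℝ) ^ (-(α - γ))) (j + 1), ← Real.rpow_mul (by norm_num)]
    push_cast
    ring_nf
  have hsum_t : Summable (fun j : ℕ => (2:ℝ) ^ (-(α - γ) * ((j:ℝ) + 1))) := by
    have : Summable (fun j : ℕ => ((2:ℝ) ^ (-(α - γ))) ^ (j + 1)) := by
      simpa [pow_succ, mul_comm] using hgeom.mul_left ((2:ℝ) ^ (-(α - γ)))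
    exact this.congr fun j => (hshape j).symm
  have hsum_c : Summable c := hsum_t.mul_left _
  -- assemble
  have key : P {ω | x < |X ω|} ≤ ENNReal.ofReal (∑' j, c j) := by
    rw [hUnion, measure_iUnion hdisj hAmeas,
      ENNReal.ofReal_tsum_of_nonneg hc_nonneg hsum_c]
    exact ENNReal.tsum_le_tsum fun j =>
      (ENNReal.le_ofReal_iff_toReal_le (measure_ne_top P _) (hc_nonneg j)).2 (hterm j)
  have final : (P {ω | x < |X ω|}).toReal ≤ ∑' j, c j :=
    ENNReal.toReal_le_of_le_ofReal (tsum_nonneg hc_nonneg) key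
  refine final.trans_eq ?_
  rw [hc, tsum_mul_left]
  ring
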